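/- arXiv:2403.17305 — 6 statements merged into one kernel-verified Lean document; each statement's English description precedes it below -/
import Mathlib

section
/- Let T > 0 be real and ρ ∈ ℝ. Then the identity sinh(T−t)²/sinh(T)² + 2ρ·sinh(T−t)·sinh(t)/sinh(T)² + sinh(t)²/sinh(T)² + 2·sinh(T−t)·sinh(t)/sinh(T) = 1 holds for every t with 0 < t < T if and only if ρ = exp(−T). (Constancy of the variance of the Ornstein–Uhlenbeck bridge mixture.) -/
lemma sinh_add_sq (a b : ℝ) :
    Real.sinh (a + b) ^ 2 =
      Real.sinh a ^ 2 + Real.sinh b ^ 2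
        + 2 * Real.cosh (a + b) * Real.sinh a * Real.sinh b := by
  rw [Real.sinh_add, Real.cosh_add]
  nlinarith [Real.cosh_sq a, Real.cosh_sq b]

/-- Constancy of the variance of the Ornstein--Uhlenbeck bridge mixture. -/
theorem ou_bridge_mixture_variance_constant (T : ℝ) (hT : 0 < T) (ρ : ℝ) :
    (∀ t : ℝ, 0 < t → t < T →
        Real.sinh (T - t) ^ 2 / Real.sinh T ^ 2
          + 2 * ρ * Real.sinh (T - t) * Real.sinh t / Real.sinh T ^ 2
          + Real.sinh t ^ 2 / Real.sinh T ^ 2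
          + 2 * Real.sinh (T - t) * Real.sinh t / Real.sinh T = 1)
      ↔ ρ = Real.exp (-T) := by
  have hS : 0 < Real.sinh T := Real.sinh_pos_iff.2 hT
  constructor
  · intro h
    have ht := h (T / 2) (by linarith) (by linarith)
    have h2 : T - T / 2 = T / 2 := by ring
    rw [h2] at ht
    have hs : 0 < Real.sinh (T / 2) := Real.sinh_pos_iff.2 (by linarith)
    have hkey := sinh_add_sq (T / 2) (T / 2)
    have h3 : T / 2 + T / 2 = T := by ring
    rw [h3] at hkey
    have hexp : Real.cosh T - Real.sinh T = Real.exp (-T) := Real.cosh_sub_sinh T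
    field_simp at ht
    have hcancel : ρ * (2 * Real.sinh (T / 2) ^ 2 * Real.sinh T) =
        Real.exp (-T) * (2 * Real.sinh (T / 2) ^ 2 * Real.sinh T) := by
      linear_combination Real.sinh T * ht + Real.sinh T * hkey + 2 * Real.sinh (T / 2) ^ 2 * Real.sinh T * hexp
    exact mul_right_cancel₀ (by positivity) hcancel
  · intro hρ t ht0 htT
    have hkey := sinh_add_sq (T - t) t
    have h3 : T - t + t = T := by ring
    rw [h3] at hkey
    have hexp : Real.cosh T - Real.sinh T = Real.exp (-T) := Real.cosh_sub_sinh T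
    rw [hρ, ← hexp]
    field_simp
    linear_combination (-1 : ℝ) * hkey
end

section
/- Let T > 0 and ρ ∈ (−1,1). For t ∈ [0,T] set a(t) = sinh(T−t)/sinh(T), b(t) = sinh(t)/sinh(T), and v(t) = 2·sinh(T−t)·sinh(t)/sinh(T). Let Q_t be the pushforward of the product measure γ_ρ ⊗ N(0,1) on ℝ² × ℝ under the map ((x,z),w) ↦ a(t)·x + b(t)·z + √(v(t))·w. Then Q_t = N(0,1) for all t ∈ [0,T] if and only if ρ = exp(−T). -/
open MeasureTheory ProbabilityTheory Real

/-- The centered Gaussian measure on `ℝ²` with covariance matrix `[[1, ρ], [ρ, 1]]`,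
realized as the law of `(U, ρ·U + √(1-ρ²)·V)` for `U, V` independent standard Gaussians. -/
noncomputable def gaussianPair (ρ : ℝ) : Measure (ℝ × ℝ) :=
  Measure.map (fun p : ℝ × ℝ => (p.1, ρ * p.1 + Real.sqrt (1 - ρ ^ 2) * p.2))
    ((gaussianReal 0 1).prod (gaussianReal 0 1))

lemma pdf_mul (α : ℝ) {β : ℝ} (hβ : β ≠ 0) (x u : ℝ) :
    gaussianPDFReal 0 1 x * gaussianPDFReal (α * x) (NNReal.mk (β ^ 2) (sq_nonneg β)) u
      = gaussianPDFReal 0 (NNReal.mk (α ^ 2 + β ^ 2) (by positivity)) u *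
        gaussianPDFReal (α * u / (α ^ 2 + β ^ 2))
          (NNReal.mk (β ^ 2 / (α ^ 2 + β ^ 2)) (by positivity)) x := by
  have hβ2 : (0:ℝ) < β ^ 2 := by positivity
  have hs2 : (0:ℝ) < α ^ 2 + β ^ 2 := by positivity
  simp only [gaussianPDFReal, NNReal.coe_mk, NNReal.coe_one]
  rw [mul_mul_mul_comm, mul_mul_mul_comm (√(2 * π * (α ^ 2 + β ^ 2)))⁻¹]
  congr 1
  · rw [← mul_inv, ← mul_inv, ← Real.sqrt_mul (by positivity), ← Real.sqrt_mul (by positivity)]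
    congr 1
    field_simp
  · rw [← Real.exp_add, ← Real.exp_add]
    congr 1
    field_simp
    ring

lemma conv_integral (α : ℝ) {β : ℝ} (hβ : β ≠ 0) (u : ℝ) :
    ∫ x, gaussianPDFReal 0 1 x * gaussianPDFReal (α * x) (NNReal.mk (β ^ 2) (sq_nonneg β)) u
      = gaussianPDFReal 0 (NNReal.mk (α ^ 2 + β ^ 2) (by positivity)) u := by
  have hs2 : (0:ℝ) < α ^ 2 + β ^ 2 := by positivity
  have hw : ((NNReal.mk (β ^ 2 / (α ^ 2 + β ^ 2)) (by positivity)) : NNReal) ≠ 0 := by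
    rw [← NNReal.coe_ne_zero, NNReal.coe_mk]
    positivity
  simp_rw [pdf_mul α hβ _ u]
  rw [integral_const_mul, integral_gaussianPDFReal_eq_one _ hw, mul_one]

lemma conv_integrable (α : ℝ) {β : ℝ} (hβ : β ≠ 0) (u : ℝ) :
    Integrable (fun x => gaussianPDFReal 0 1 x * gaussianPDFReal (α * x) (NNReal.mk (β ^ 2) (sq_nonneg β)) u) := by
  simp_rw [pdf_mul α hβ _ u]
  exact (integrable_gaussianPDFReal _ _).const_mul _

lemma conv_lintegral (α : ℝ) {β : ℝ} (hβ : β ≠ 0) (u : ℝ) :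
    ∫⁻ x, gaussianPDF 0 1 x * gaussianPDF (α * x) (NNReal.mk (β ^ 2) (sq_nonneg β)) u
      = gaussianPDF 0 (NNReal.mk (α ^ 2 + β ^ 2) (by positivity)) u := by
  simp_rw [gaussianPDF, ← ENNReal.ofReal_mul (gaussianPDFReal_nonneg 0 1 _)]
  rw [← ofReal_integral_eq_lintegral_ofReal (conv_integrable α hβ u)
    (ae_of_all _ fun x => mul_nonneg (gaussianPDFReal_nonneg _ _ _) (gaussianPDFReal_nonneg _ _ _)),
    conv_integral α hβ u]

lemma map_add_gaussian_ne (α : ℝ) {β : ℝ} (hβ : β ≠ 0) :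
    ((gaussianReal 0 1).prod (gaussianReal 0 1)).map (fun p : ℝ × ℝ => α * p.1 + β * p.2)
      = gaussianReal 0 (NNReal.mk (α ^ 2 + β ^ 2) (by positivity)) := by
  have hw : ((NNReal.mk (β ^ 2) (sq_nonneg β)) : NNReal) ≠ 0 := by
    rw [← NNReal.coe_ne_zero, NNReal.coe_mk]; positivity
  have hs2 : ((NNReal.mk (α ^ 2 + β ^ 2) (by positivity)) : NNReal) ≠ 0 := by
    rw [← NNReal.coe_ne_zero, NNReal.coe_mk]; positivity
  have hf : Measurable (fun p : ℝ × ℝ => α * p.1 + β * p.2) := by fun_prop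
  have hFm : Measurable (fun q : ℝ × ℝ => gaussianPDF (α * q.1) (NNReal.mk (β ^ 2) (sq_nonneg β)) q.2) := by
    unfold gaussianPDF gaussianPDFReal
    exact Measurable.ennreal_ofReal (by fun_prop)
  ext s hs
  rw [Measure.map_apply hf hs, Measure.prod_apply (hf hs)]
  have hmap : ∀ x : ℝ, (gaussianReal 0 1) (Prod.mk x ⁻¹' ((fun p : ℝ × ℝ => α * p.1 + β * p.2) ⁻¹' s))
      = ∫⁻ y in s, gaussianPDF (α * x) (NNReal.mk (β ^ 2) (sq_nonneg β)) y := by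
    intro x
    have h1 : (gaussianReal 0 1).map (fun y => α * x + β * y)
        = gaussianReal (α * x) (NNReal.mk (β ^ 2) (sq_nonneg β)) := by
      calc (gaussianReal 0 1).map (fun y => α * x + β * y)
          = ((gaussianReal 0 1).map (β * ·)).map (α * x + ·) := by
            rw [Measure.map_map (measurable_const_add _) (measurable_const_mul β)]
            rfl
        _ = (gaussianReal (β * 0) ((NNReal.mk (β ^ 2) (sq_nonneg β)) * 1)).map (α * x + ·) := by
            rw [gaussianReal_map_const_mul]
        _ = gaussianReal (β * 0 + α * x) ((NNReal.mk (β ^ 2) (sq_nonneg β)) * 1) :=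
            gaussianReal_map_const_add _
        _ = gaussianReal (α * x) (NNReal.mk (β ^ 2) (sq_nonneg β)) := by rw [mul_zero, zero_add, mul_one]
    have h2 : Prod.mk x ⁻¹' ((fun p : ℝ × ℝ => α * p.1 + β * p.2) ⁻¹' s)
        = (fun y => α * x + β * y) ⁻¹' s := rfl
    rw [h2, ← Measure.map_apply (by fun_prop) hs, h1, gaussianReal_apply _ hw s]
  simp_rw [hmap]
  have hGm : Measurable fun x : ℝ => ∫⁻ y, gaussianPDF (α * x) (NNReal.mk (β ^ 2) (sq_nonneg β)) y
      ∂(volume.restrict s) := Measurable.lintegral_prod_right' hFm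
  rw [gaussianReal_of_var_ne_zero 0 one_ne_zero,
    lintegral_withDensity_eq_lintegral_mul _ (measurable_gaussianPDF 0 1) hGm]
  have hswap : ∫⁻ x, gaussianPDF 0 1 x *
        ∫⁻ y, gaussianPDF (α * x) (NNReal.mk (β ^ 2) (sq_nonneg β)) y ∂(volume.restrict s) ∂volume
      = ∫⁻ y, (∫⁻ x, gaussianPDF 0 1 x * gaussianPDF (α * x) (NNReal.mk (β ^ 2) (sq_nonneg β)) y ∂volume)
          ∂(volume.restrict s) :=
    calc ∫⁻ x, gaussianPDF 0 1 x *
          ∫⁻ y, gaussianPDF (α * x) (NNReal.mk (β ^ 2) (sq_nonneg β)) y ∂(volume.restrict s) ∂volume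
        = ∫⁻ x, ∫⁻ y, gaussianPDF 0 1 x * gaussianPDF (α * x) (NNReal.mk (β ^ 2) (sq_nonneg β)) y
            ∂(volume.restrict s) ∂volume :=
          lintegral_congr fun x =>
            (lintegral_const_mul _ (hFm.comp measurable_prodMk_left)).symm
      _ = _ := lintegral_lintegral_swap
          (((measurable_gaussianPDF 0 1).comp measurable_fst).mul hFm).aemeasurable
  simp only [Pi.mul_apply]
  rw [hswap]
  simp_rw [conv_lintegral α hβ]
  rw [← gaussianReal_apply _ hs2 s]

lemma map_add_gaussian (α β : ℝ) :
    ((gaussianReal 0 1).prod (gaussianReal 0 1)).map (fun p : ℝ × ℝ => α * p.1 + β * p.2)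
      = gaussianReal 0 (NNReal.mk (α ^ 2 + β ^ 2) (by positivity)) := by
  rcases eq_or_ne β 0 with hβ | hβ
  · subst hβ
    have h1 : (fun p : ℝ × ℝ => α * p.1 + 0 * p.2) = (α * ·) ∘ Prod.fst := by
      funext p; simp
    rw [h1, ← Measure.map_map (measurable_const_mul α) measurable_fst,
      Measure.map_fst_prod]
    simp only [measure_univ, one_smul]
    rw [gaussianReal_map_const_mul, mul_zero, mul_one]
    congr 1
    ext
    simp [NNReal.coe_mk]
  · exact map_add_gaussian_ne α hβ

lemma map_add_gaussian₃ (c₁ c₂ c₃ : ℝ) :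
    ((((gaussianReal 0 1).prod (gaussianReal 0 1)).prod (gaussianReal 0 1)).map
      (fun q : (ℝ × ℝ) × ℝ => c₁ * q.1.1 + c₂ * q.1.2 + c₃ * q.2))
      = gaussianReal 0 (NNReal.mk (c₁ ^ 2 + c₂ ^ 2 + c₃ ^ 2) (by positivity)) := by
  set s := Real.sqrt (c₁ ^ 2 + c₂ ^ 2) with hs
  have hs0 : 0 ≤ s := Real.sqrt_nonneg _
  have hs2 : s ^ 2 = c₁ ^ 2 + c₂ ^ 2 := Real.sq_sqrt (by positivity)
  have h1 : ((gaussianReal 0 1).prod (gaussianReal 0 1)).map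
      (fun p : ℝ × ℝ => c₁ * p.1 + c₂ * p.2) = (gaussianReal 0 1).map (s * ·) := by
    rw [map_add_gaussian, gaussianReal_map_const_mul]
    congr 1
    · ring
    · ext; simp [NNReal.coe_mk, hs2]
  have hmh : Measurable (fun p : ℝ × ℝ => c₁ * p.1 + c₂ * p.2) := by fun_prop
  have key : (((gaussianReal 0 1).prod (gaussianReal 0 1)).prod (gaussianReal 0 1)).map
      (Prod.map (fun p : ℝ × ℝ => c₁ * p.1 + c₂ * p.2) (id : ℝ → ℝ))
      = ((gaussianReal 0 1).prod (gaussianReal 0 1)).map (Prod.map (s * ·) (id : ℝ → ℝ)) := by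
    rw [← Measure.map_prod_map _ _ hmh measurable_id,
      ← Measure.map_prod_map _ _ (measurable_const_mul s) measurable_id, h1]
  have comp1 : (fun q : (ℝ × ℝ) × ℝ => c₁ * q.1.1 + c₂ * q.1.2 + c₃ * q.2)
      = (fun p : ℝ × ℝ => 1 * p.1 + c₃ * p.2) ∘
        (Prod.map (fun p : ℝ × ℝ => c₁ * p.1 + c₂ * p.2) (id : ℝ → ℝ)) := by
    funext q; simp [Prod.map]
  have comp2 : (fun p : ℝ × ℝ => 1 * (s * p.1) + c₃ * p.2)
      = (fun p : ℝ × ℝ => 1 * p.1 + c₃ * p.2) ∘ (Prod.map (s * ·) (id : ℝ → ℝ)) := by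
    funext p; simp [Prod.map]
  rw [comp1, ← Measure.map_map (by fun_prop) (hmh.prodMap measurable_id), key,
    Measure.map_map (by fun_prop) ((measurable_const_mul s).prodMap measurable_id),
    ← comp2]
  have : (fun p : ℝ × ℝ => 1 * (s * p.1) + c₃ * p.2) = fun p : ℝ × ℝ => s * p.1 + c₃ * p.2 := by
    funext p; ring_nf
  rw [this, map_add_gaussian]
  congr 1
  ext; simp [NNReal.coe_mk, hs2]

lemma Q_eq (ρ A B C : ℝ) :
    Measure.map (fun q : (ℝ × ℝ) × ℝ => A * q.1.1 + B * q.1.2 + C * q.2)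
      ((gaussianPair ρ).prod (gaussianReal 0 1))
      = gaussianReal 0 (NNReal.mk ((A + B * ρ) ^ 2 + (B * Real.sqrt (1 - ρ ^ 2)) ^ 2 + C ^ 2)
          (by positivity)) := by
  have hmh : Measurable (fun p : ℝ × ℝ => (p.1, ρ * p.1 + Real.sqrt (1 - ρ ^ 2) * p.2)) := by
    fun_prop
  have h1 : (gaussianPair ρ).prod (gaussianReal 0 1)
      = (((gaussianReal 0 1).prod (gaussianReal 0 1)).prod (gaussianReal 0 1)).map
        (Prod.map (fun p : ℝ × ℝ => (p.1, ρ * p.1 + Real.sqrt (1 - ρ ^ 2) * p.2)) (id : ℝ → ℝ)) := by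
    rw [← Measure.map_prod_map _ _ hmh measurable_id, Measure.map_id]
    rfl
  rw [h1, Measure.map_map (by fun_prop) (hmh.prodMap measurable_id)]
  have h2 : ((fun q : (ℝ × ℝ) × ℝ => A * q.1.1 + B * q.1.2 + C * q.2) ∘
      (Prod.map (fun p : ℝ × ℝ => (p.1, ρ * p.1 + Real.sqrt (1 - ρ ^ 2) * p.2)) (id : ℝ → ℝ)))
      = fun q : (ℝ × ℝ) × ℝ =>
        (A + B * ρ) * q.1.1 + (B * Real.sqrt (1 - ρ ^ 2)) * q.1.2 + C * q.2 := by
    funext q; simp [Prod.map]; ring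
  rw [h2, map_add_gaussian₃]

lemma gaussianReal_inj {w : NNReal} (h : gaussianReal 0 w = gaussianReal 0 1) : w = 1 := by
  rcases eq_or_ne w 0 with hw | hw
  · exfalso
    rw [hw, gaussianReal_zero_var] at h
    have h0 : (Measure.dirac (0:ℝ)) {0} = 1 := by simp
    have h1 : (gaussianReal 0 1) {0} = 0 :=
      gaussianReal_absolutelyContinuous 0 one_ne_zero (by simp)
    rw [h] at h0
    rw [h0] at h1
    exact one_ne_zero h1
  · rw [gaussianReal_of_var_ne_zero 0 hw, gaussianReal_of_var_ne_zero 0 one_ne_zero] at h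
    have hae : gaussianPDF 0 w =ᵐ[volume] gaussianPDF 0 1 :=
      (withDensity_eq_iff_of_sigmaFinite (measurable_gaussianPDF 0 w).aemeasurable
        (measurable_gaussianPDF 0 1).aemeasurable).mp h
    have hc : ∀ v : NNReal, Continuous (gaussianPDF 0 v) := by
      intro v
      unfold gaussianPDF gaussianPDFReal
      exact ENNReal.continuous_ofReal.comp (by fun_prop)
    have heq : gaussianPDF 0 w = gaussianPDF 0 1 := ((hc w).ae_eq_iff_eq volume (hc 1)).mp hae
    have h0 := congrFun heq 0
    unfold gaussianPDF gaussianPDFReal at h0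
    simp only [sub_zero, ne_eq, OfNat.ofNat_ne_zero, not_false_eq_true, zero_pow, neg_zero,
      zero_div, Real.exp_zero, mul_one, NNReal.coe_one] at h0
    rw [ENNReal.ofReal_eq_ofReal_iff (by positivity) (by positivity)] at h0
    have h1 : 2 * π * (w : ℝ) = 2 * π * 1 := by
      rw [mul_one]
      exact (Real.sqrt_inj (by positivity) (by positivity)).mp (inv_inj.mp h0)
    have h2π : (2 * π : ℝ) ≠ 0 := by positivity
    have h2 := mul_left_cancel₀ h2π h1
    exact NNReal.coe_injective (by simpa using h2)

/-- The mixture of Ornstein--Uhlenbeck bridges with endpoints distributed as `γ_ρ` has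
standard Gaussian marginals at every time `t ∈ [0,T]` if and only if `ρ = exp(-T)`. -/
theorem ou_bridge_mixture_invariant_iff (T : ℝ) (hT : 0 < T)
    (ρ : ℝ) (hρ : ρ ∈ Set.Ioo (-1 : ℝ) 1)
    (a b v : ℝ → ℝ)
    (ha : ∀ t, a t = Real.sinh (T - t) / Real.sinh T)
    (hb : ∀ t, b t = Real.sinh t / Real.sinh T)
    (hv : ∀ t, v t = 2 * Real.sinh (T - t) * Real.sinh t / Real.sinh T)
    (Q : ℝ → Measure ℝ)
    (hQ : ∀ t, Q t = Measure.map
      (fun q : (ℝ × ℝ) × ℝ => a t * q.1.1 + b t * q.1.2 + Real.sqrt (v t) * q.2)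
      ((gaussianPair ρ).prod (gaussianReal 0 1))) :
    (∀ t ∈ Set.Icc (0 : ℝ) T, Q t = gaussianReal 0 1) ↔ ρ = Real.exp (-T) := by
  have hS : 0 < Real.sinh T := Real.sinh_pos_iff.mpr hT
  have hρ2 : (Real.sqrt (1 - ρ ^ 2)) ^ 2 = 1 - ρ ^ 2 :=
    Real.sq_sqrt (by nlinarith [hρ.1, hρ.2])
  have hvnn : ∀ t ∈ Set.Icc (0 : ℝ) T, 0 ≤ v t := by
    intro t ht
    rw [hv t]
    have h1 : 0 ≤ Real.sinh (T - t) := Real.sinh_nonneg_iff.mpr (by linarith [ht.2])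
    have h2 : 0 ≤ Real.sinh t := Real.sinh_nonneg_iff.mpr ht.1
    positivity
  have key : ∀ t ∈ Set.Icc (0 : ℝ) T, Q t = gaussianReal 0
      (NNReal.mk ((a t + b t * ρ) ^ 2 + (b t * Real.sqrt (1 - ρ ^ 2)) ^ 2 + (Real.sqrt (v t)) ^ 2)
        (by positivity)) := by
    intro t ht
    rw [hQ t, Q_eq]
  have hsigma : ∀ t ∈ Set.Icc (0 : ℝ) T,
      (a t + b t * ρ) ^ 2 + (b t * Real.sqrt (1 - ρ ^ 2)) ^ 2 + (Real.sqrt (v t)) ^ 2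
        = a t ^ 2 + 2 * a t * b t * ρ + b t ^ 2 + v t := by
    intro t ht
    rw [mul_pow, hρ2, Real.sq_sqrt (hvnn t ht)]
    ring
  constructor
  · intro H
    have htm : T / 2 ∈ Set.Icc (0 : ℝ) T := ⟨by linarith, by linarith⟩
    have h2 := (key _ htm).symm.trans (H _ htm)
    have h3 := gaussianReal_inj h2
    have h4 : (a (T/2) + b (T/2) * ρ) ^ 2 + (b (T/2) * Real.sqrt (1 - ρ ^ 2)) ^ 2
        + (Real.sqrt (v (T/2))) ^ 2 = 1 := by
      have := congrArg (fun x : NNReal => (x : ℝ)) h3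
      simpa using this
    rw [hsigma _ htm, ha, hb, hv] at h4
    have hTT : T - T / 2 = T / 2 := by ring
    rw [hTT] at h4
    set s := Real.sinh (T / 2) with hs
    set c := Real.cosh (T / 2) with hc
    have hs0 : 0 < s := Real.sinh_pos_iff.mpr (by linarith)
    have hsinhT : Real.sinh T = 2 * s * c := by
      have := Real.sinh_two_mul (T / 2)
      rw [(by ring : 2 * (T / 2) = T)] at this
      exact this
    have hcoshT : Real.cosh T = c ^ 2 + s ^ 2 := by
      have := Real.cosh_two_mul (T / 2)
      rw [(by ring : 2 * (T / 2) = T)] at this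
      exact this
    have hc2 : c ^ 2 = s ^ 2 + 1 := Real.cosh_sq (T / 2)
    rw [← Real.cosh_sub_sinh, hsinhT, hcoshT]
    rw [hsinhT] at h4
    have hsc : (0:ℝ) < 2 * s * c := by rw [← hsinhT]; exact hS
    have hc0 : 0 < c := Real.cosh_pos _
    field_simp at h4
    have h5 : 2*s^2*(2*s*c)^5 * (ρ - (c^2 + s^2 - 2*s*c)) = 0 := by
      linear_combination (2*s^2*(2*s*c)^5/2) * h4 + 2*s^2*(2*s*c)^5 * hc2
    have hne : 2*s^2*(2*s*c)^5 ≠ 0 := by positivity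
    have h6 := (mul_eq_zero.mp h5).resolve_left hne
    linarith
  · intro hρT t ht
    rw [key t ht]
    have h1 : (a t + b t * ρ) ^ 2 + (b t * Real.sqrt (1 - ρ ^ 2)) ^ 2
        + (Real.sqrt (v t)) ^ 2 = 1 := by
      rw [hsigma t ht, ha, hb, hv]
      set A := Real.sinh (T - t) with hA
      set B := Real.sinh t with hB
      have hsinhT : Real.sinh T = A * Real.cosh t + Real.cosh (T - t) * B := by
        have := Real.sinh_add (T - t) t
        rw [(by ring : T - t + t = T)] at this
        exact this
      have hcoshT : Real.cosh T = Real.cosh (T - t) * Real.cosh t + A * B := by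
        have := Real.cosh_add (T - t) t
        rw [(by ring : T - t + t = T)] at this
        exact this
      have hρ' : ρ = Real.cosh T - Real.sinh T := by
        rw [hρT, ← Real.cosh_sub_sinh]
      have hA2 : Real.cosh (T - t) ^ 2 = A ^ 2 + 1 := Real.cosh_sq (T - t)
      have hB2 : Real.cosh t ^ 2 = B ^ 2 + 1 := Real.cosh_sq t
      rw [hρ', hcoshT, hsinhT]
      rw [hsinhT] at hS
      field_simp
      linear_combination (-A ^ 2) * hB2 +
        (-B ^ 2) * hA2
    congr 1
    exact NNReal.coe_injective (by simpa using h1)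
end

section
/- For all real numbers r, s, c, the spectrum of the matrix C(r,s,c) is exactly the set {½(c+r+2+√(c²−2cr+5r²+8rs+4s²)), ½(c+r+2−√(c²−2cr+5r²+8rs+4s²)), ½(−c−r+2+√(c²−2cr+5r²−8rs+4s²)), ½(−c−r+2−√(c²−2cr+5r²−8rs+4s²))}. -/
/-- The symmetric 4×4 Toeplitz matrix appearing in the construction of the
candidate measure for the Ornstein--Uhlenbeck Brenier--Schrödinger problem. -/
def matC (r s c : ℝ) : Matrix (Fin 4) (Fin 4) ℝ :=
  !![1, r, s, c;
     r, 1, r, s;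
     s, r, 1, r;
     c, s, r, 1]

set_option maxHeartbeats 1600000 in
lemma det_sub_matC (r s c x : ℝ) :
    Matrix.det (algebraMap ℝ (Matrix (Fin 4) (Fin 4) ℝ) x - matC r s c) =
      ((2*x - (c+r+2))^2 - (c^2 - 2*c*r + 5*r^2 + 8*r*s + 4*s^2))
      * ((2*x - (-c-r+2))^2 - (c^2 - 2*c*r + 5*r^2 - 8*r*s + 4*s^2)) / 16 := by
  have : algebraMap ℝ (Matrix (Fin 4) (Fin 4) ℝ) x - matC r s c =
      !![x-1, -r, -s, -c;
         -r, x-1, -r, -s;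
         -s, -r, x-1, -r;
         -c, -s, -r, x-1] := by
    rw [Matrix.algebraMap_eq_diagonal]
    ext i j
    fin_cases i <;> fin_cases j <;>
      simp [matC, Matrix.diagonal, Matrix.sub_apply]
  rw [this]
  simp [Matrix.det_succ_row_zero, Fin.sum_univ_succ, Fin.succAbove,
    Fin.castSucc, Fin.castAdd, Fin.castLE]
  ring

/-- The spectrum of `C(r,s,c)`. -/
theorem spectrum_matC (r s c : ℝ) :
    spectrum ℝ (matC r s c) =
      { (c + r + 2 + Real.sqrt (c ^ 2 - 2 * c * r + 5 * r ^ 2 + 8 * r * s + 4 * s ^ 2)) / 2,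
        (c + r + 2 - Real.sqrt (c ^ 2 - 2 * c * r + 5 * r ^ 2 + 8 * r * s + 4 * s ^ 2)) / 2,
        (-c - r + 2 + Real.sqrt (c ^ 2 - 2 * c * r + 5 * r ^ 2 - 8 * r * s + 4 * s ^ 2)) / 2,
        (-c - r + 2 - Real.sqrt (c ^ 2 - 2 * c * r + 5 * r ^ 2 - 8 * r * s + 4 * s ^ 2)) / 2 } := by
  set s1 := Real.sqrt (c ^ 2 - 2 * c * r + 5 * r ^ 2 + 8 * r * s + 4 * s ^ 2) with hs1
  set s2 := Real.sqrt (c ^ 2 - 2 * c * r + 5 * r ^ 2 - 8 * r * s + 4 * s ^ 2) with hs2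
  have h1 : s1 ^ 2 = c ^ 2 - 2 * c * r + 5 * r ^ 2 + 8 * r * s + 4 * s ^ 2 := by
    rw [hs1, Real.sq_sqrt]; nlinarith [sq_nonneg (c - r), sq_nonneg (s + r)]
  have h2 : s2 ^ 2 = c ^ 2 - 2 * c * r + 5 * r ^ 2 - 8 * r * s + 4 * s ^ 2 := by
    rw [hs2, Real.sq_sqrt]; nlinarith [sq_nonneg (c - r), sq_nonneg (s - r)]
  ext x
  simp only [Set.mem_insert_iff, Set.mem_singleton_iff]
  rw [spectrum.mem_iff, Matrix.isUnit_iff_isUnit_det, isUnit_iff_ne_zero, not_ne_iff,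
    det_sub_matC]
  have key : ((2*x - (c+r+2))^2 - (c^2 - 2*c*r + 5*r^2 + 8*r*s + 4*s^2))
      * ((2*x - (-c-r+2))^2 - (c^2 - 2*c*r + 5*r^2 - 8*r*s + 4*s^2)) / 16 =
      ((x - (c + r + 2 + s1) / 2) * (x - (c + r + 2 - s1) / 2))
      * ((x - (-c - r + 2 + s2) / 2) * (x - (-c - r + 2 - s2) / 2)) := by
    rw [← h1, ← h2]; ring
  rw [key, mul_eq_zero, mul_eq_zero, mul_eq_zero, sub_eq_zero, sub_eq_zero,
    sub_eq_zero, sub_eq_zero]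
  tauto
end

section
/- Let r ∈ (−1,1) and s, c ∈ ℝ. The matrix C(r,s,c) is positive definite if and only if (s²+2rs+r²−r−1)/(r+1) < c < (s²−2rs+r²+r−1)/(r−1). -/
lemma quadForm_matC (r s c : ℝ) (x : Fin 4 → ℝ) :
    dotProduct (star x) ((matC r s c).mulVec x) =
      x 0*(x 0 + r*x 1 + s*x 2 + c*x 3) + x 1*(r*x 0 + x 1 + r*x 2 + s*x 3)
      + x 2*(s*x 0 + r*x 1 + x 2 + r*x 3) + x 3*(c*x 0 + s*x 1 + r*x 2 + x 3) := by
  simp [matC, dotProduct, Matrix.mulVec, Fin.sum_univ_four, Matrix.cons_val_zero,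
    Matrix.cons_val_one, Matrix.head_cons]

lemma quad_pos (r s c a b d e : ℝ) (hr1 : -1 < r) (hr2 : r < 1)
    (hA : 0 < (1+c)*(1+r)-(r+s)^2) (hB : 0 < (1-c)*(1-r)-(r-s)^2)
    (hx : ¬ (a = 0 ∧ b = 0 ∧ d = 0 ∧ e = 0)) :
    0 < a*(a + r*b + s*d + c*e) + b*(r*a + b + r*d + s*e)
      + d*(s*a + r*b + d + r*e) + e*(c*a + s*b + r*d + e) := by
  have hp : (0:ℝ) < 1 + r := by linarith
  have hm : (0:ℝ) < 1 - r := by linarith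
  set Q := a*(a + r*b + s*d + c*e) + b*(r*a + b + r*d + s*e)
      + d*(s*a + r*b + d + r*e) + e*(c*a + s*b + r*d + e) with hQ
  have key : 2*(1-r)*(1+r)*Q
      = (1-r)*((1+r)*(b+d)+(r+s)*(a+e))^2 + (1-r)*((1+c)*(1+r)-(r+s)^2)*(a+e)^2
        + (1+r)*((1-r)*(b-d)+(r-s)*(a-e))^2 + (1+r)*((1-c)*(1-r)-(r-s)^2)*(a-e)^2 := by
    rw [hQ]; ring
  have h2r : (0:ℝ) < 2*(1-r)*(1+r) := by positivity
  have t1 : 0 ≤ (1-r)*((1+r)*(b+d)+(r+s)*(a+e))^2 := by positivity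
  have t2 : 0 ≤ (1-r)*((1+c)*(1+r)-(r+s)^2)*(a+e)^2 := by
    apply mul_nonneg (mul_nonneg hm.le hA.le) (sq_nonneg _)
  have t3 : 0 ≤ (1+r)*((1-r)*(b-d)+(r-s)*(a-e))^2 := by positivity
  have t4 : 0 ≤ (1+r)*((1-c)*(1-r)-(r-s)^2)*(a-e)^2 := by
    apply mul_nonneg (mul_nonneg hp.le hB.le) (sq_nonneg _)
  have h4 : a + e ≠ 0 ∨ a - e ≠ 0 ∨ b + d ≠ 0 ∨ b - d ≠ 0 := by
    by_contra h
    push_neg at h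
    obtain ⟨h1, h2, h3, h5⟩ := h
    exact hx ⟨by linarith, by linarith, by linarith, by linarith⟩
  have hpos : 0 < 2*(1-r)*(1+r)*Q := by
    rw [key]
    rcases h4 with h | h | h | h
    · have hsq : 0 < (a+e)^2 :=
        lt_of_le_of_ne (sq_nonneg _) (Ne.symm (pow_ne_zero 2 h))
      have : 0 < (1-r)*((1+c)*(1+r)-(r+s)^2)*(a+e)^2 :=
        mul_pos (mul_pos hm hA) hsq
      linarith
    · have hsq : 0 < (a-e)^2 :=
        lt_of_le_of_ne (sq_nonneg _) (Ne.symm (pow_ne_zero 2 h))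
      have : 0 < (1+r)*((1-c)*(1-r)-(r-s)^2)*(a-e)^2 :=
        mul_pos (mul_pos hp hB) hsq
      linarith
    · rcases eq_or_ne (a+e) 0 with h1 | h1
      · have hT : (1+r)*(b+d)+(r+s)*(a+e) = (1+r)*(b+d) := by rw [h1]; ring
        have hne : (1+r)*(b+d) ≠ 0 := mul_ne_zero (by linarith) h
        have hsq : 0 < ((1+r)*(b+d)+(r+s)*(a+e))^2 := by
          rw [hT]
          exact lt_of_le_of_ne (sq_nonneg _) (Ne.symm (pow_ne_zero 2 hne))
        have : 0 < (1-r)*((1+r)*(b+d)+(r+s)*(a+e))^2 := mul_pos hm hsq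
        linarith
      · have hsq : 0 < (a+e)^2 :=
          lt_of_le_of_ne (sq_nonneg _) (Ne.symm (pow_ne_zero 2 h1))
        have : 0 < (1-r)*((1+c)*(1+r)-(r+s)^2)*(a+e)^2 :=
          mul_pos (mul_pos hm hA) hsq
        linarith
    · rcases eq_or_ne (a-e) 0 with h1 | h1
      · have hT : (1-r)*(b-d)+(r-s)*(a-e) = (1-r)*(b-d) := by rw [h1]; ring
        have hne : (1-r)*(b-d) ≠ 0 := mul_ne_zero (by linarith) h
        have hsq : 0 < ((1-r)*(b-d)+(r-s)*(a-e))^2 := by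
          rw [hT]
          exact lt_of_le_of_ne (sq_nonneg _) (Ne.symm (pow_ne_zero 2 hne))
        have : 0 < (1+r)*((1-r)*(b-d)+(r-s)*(a-e))^2 := mul_pos hp hsq
        linarith
      · have hsq : 0 < (a-e)^2 :=
          lt_of_le_of_ne (sq_nonneg _) (Ne.symm (pow_ne_zero 2 h1))
        have : 0 < (1+r)*((1-c)*(1-r)-(r-s)^2)*(a-e)^2 :=
          mul_pos (mul_pos hp hB) hsq
        linarith
  rcases mul_pos_iff.mp hpos with ⟨-, hQ'⟩ | ⟨hneg, -⟩
  · exact hQ'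
  · linarith

/-- Positive-definiteness criterion for `C(r,s,c)`. -/
theorem posDef_matC_iff (r s c : ℝ) (hr : r ∈ Set.Ioo (-1 : ℝ) 1) :
    (matC r s c).PosDef ↔
      ((s ^ 2 + 2 * r * s + r ^ 2 - r - 1) / (r + 1) < c
        ∧ c < (s ^ 2 - 2 * r * s + r ^ 2 + r - 1) / (r - 1)) := by
  obtain ⟨hr1, hr2⟩ := hr
  have hp : (0:ℝ) < r + 1 := by linarith
  have hm : r - 1 < 0 := by linarith
  have hLiff : (s ^ 2 + 2 * r * s + r ^ 2 - r - 1) / (r + 1) < c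
      ↔ 0 < (1+c)*(1+r)-(r+s)^2 := by
    rw [div_lt_iff₀ hp]; constructor <;> intro h <;> nlinarith
  have hUiff : c < (s ^ 2 - 2 * r * s + r ^ 2 + r - 1) / (r - 1)
      ↔ 0 < (1-c)*(1-r)-(r-s)^2 := by
    rw [lt_div_iff_of_neg hm]; constructor <;> intro h <;> nlinarith
  rw [hLiff, hUiff]
  rw [Matrix.posDef_iff_dotProduct_mulVec]
  constructor
  · rintro ⟨-, hpos⟩
    constructor
    · have hv : (![1+r, -(r+s), -(r+s), 1+r] : Fin 4 → ℝ) ≠ 0 := by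
        intro h
        have := congrFun h 0
        simp at this
        linarith
      have h1 := hpos hv
      rw [quadForm_matC] at h1
      simp only [Matrix.cons_val_zero, Matrix.cons_val_one, Matrix.head_cons, Matrix.cons_val_two, Matrix.cons_val_three, Matrix.tail_cons] at h1
      norm_num at h1
      nlinarith [h1]
    · have hv : (![1-r, -(r-s), r-s, -(1-r)] : Fin 4 → ℝ) ≠ 0 := by
        intro h
        have := congrFun h 0
        simp at this
        linarith
      have h1 := hpos hv
      rw [quadForm_matC] at h1
      simp only [Matrix.cons_val_zero, Matrix.cons_val_one, Matrix.head_cons, Matrix.cons_val_two, Matrix.cons_val_three, Matrix.tail_cons] at h1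
      norm_num at h1
      nlinarith [h1]
  · rintro ⟨hA, hB⟩
    refine ⟨?_, ?_⟩
    · ext i j
      fin_cases i <;> fin_cases j <;> simp [matC]
    · intro x hx
      have hxc : ¬ (x 0 = 0 ∧ x 1 = 0 ∧ x 2 = 0 ∧ x 3 = 0) := by
        rintro ⟨h0, h1, h2, h3⟩
        apply hx
        funext i
        fin_cases i <;> assumption
      have h1 := quad_pos r s c (x 0) (x 1) (x 2) (x 3) hr1 hr2 hA hB hxc
      rw [quadForm_matC]
      linarith [h1]
end

section
/- Let r ∈ (−1,1) and s ∈ ℝ. There exists c ∈ ℝ with (s²+2rs+r²−r−1)/(r+1) < c < (s²−2rs+r²+r−1)/(r−1) if and only if 2r² − 1 < s < 1. -/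
/-- Solvability of the two inequalities appearing in the positive-definiteness
criterion for the Toeplitz matrix `C(r,s,c)`. -/
theorem exists_c_between_iff (r s : ℝ) (hr : r ∈ Set.Ioo (-1 : ℝ) 1) :
    (∃ c : ℝ, (s ^ 2 + 2 * r * s + r ^ 2 - r - 1) / (r + 1) < c
        ∧ c < (s ^ 2 - 2 * r * s + r ^ 2 + r - 1) / (r - 1))
      ↔ (2 * r ^ 2 - 1 < s ∧ s < 1) := by
  obtain ⟨h1, h2⟩ := hr
  have hp : (0:ℝ) < r + 1 := by linarith
  have hq : (0:ℝ) < 1 - r := by linarith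
  have hn : r - 1 < 0 := by linarith
  have hr2 : r ^ 2 < 1 := by nlinarith
  have hU : (s ^ 2 - 2 * r * s + r ^ 2 + r - 1) / (r - 1)
      = (-(s ^ 2 - 2 * r * s + r ^ 2 + r - 1)) / (1 - r) := by
    rw [div_eq_div_iff hn.ne (by linarith : (1:ℝ) - r ≠ 0)]
    ring
  rw [hU]
  constructor
  · rintro ⟨c, hc1, hc2⟩
    rw [div_lt_iff₀ hp] at hc1
    rw [lt_div_iff₀ hq] at hc2
    have a := mul_lt_mul_of_pos_right hc1 hq
    have b := mul_lt_mul_of_pos_right hc2 hp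
    have hprod : (1 - s) * (s - (2 * r ^ 2 - 1)) > 0 := by nlinarith [a, b]
    constructor
    · rcases le_or_gt s (2 * r ^ 2 - 1) with h | h
      · nlinarith [hprod]
      · exact h
    · rcases le_or_gt 1 s with h | h
      · nlinarith [hprod]
      · exact h
  · rintro ⟨hs1, hs2⟩
    apply exists_between
    rw [div_lt_div_iff₀ hp hq]
    nlinarith [mul_pos (by linarith : (0:ℝ) < 1 - s)
      (by linarith : (0:ℝ) < s - (2 * r ^ 2 - 1))]
end

section
/- For all real s, t ≥ 0 and every x ∈ ℝ, the probability measure obtained by first sampling y from N(exp(−t)·x, 1 − exp(−2t)) and then sampling from N(exp(−s)·y, 1 − exp(−2s)) equals N(exp(−(s+t))·x, 1 − exp(−2(s+t))). (Chapman–Kolmogorov / semigroup property of the Ornstein–Uhlenbeck transition kernels.) -/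
open MeasureTheory ProbabilityTheory Real
open scoped NNReal ENNReal

lemma meas_gauss (v : ℝ≥0) : Measurable fun m : ℝ => gaussianReal m v := by
  by_cases hv : v = 0
  · simpa [hv, gaussianReal_zero_var] using Measure.measurable_dirac
  · rw [Measure.measurable_measure]
    intro s hs
    simp_rw [gaussianReal_apply _ hv s, ← lintegral_indicator hs]
    apply Measurable.lintegral_prod_right' (f := fun p : ℝ × ℝ => s.indicator (gaussianPDF p.1 v) p.2)
    apply Measurable.indicator _ (measurable_snd hs)
    unfold gaussianPDF gaussianPDFReal
    fun_prop

lemma pdf_conv {v w : ℝ≥0} (hv : v ≠ 0) (hw : w ≠ 0) (m y z : ℝ) :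
    gaussianPDFReal m v z * gaussianPDFReal z w y =
      gaussianPDFReal m (v + w) y *
        gaussianPDFReal ((w * m + v * y) / (v + w)) (v * w / (v + w)) z := by
  have hv' : (0:ℝ) < v := lt_of_le_of_ne v.coe_nonneg (by exact_mod_cast hv.symm)
  have hw' : (0:ℝ) < w := lt_of_le_of_ne w.coe_nonneg (by exact_mod_cast hw.symm)
  have hvw : (0:ℝ) < (v:ℝ) + w := by linarith
  simp only [gaussianPDFReal, NNReal.coe_add, NNReal.coe_mul, NNReal.coe_div]
  rw [mul_mul_mul_comm, mul_mul_mul_comm ((Real.sqrt (2 * π * ((v:ℝ)+w)))⁻¹), ← exp_add,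
    ← exp_add, ← mul_inv, ← mul_inv]
  have hsq : Real.sqrt (2 * π * v) * Real.sqrt (2 * π * w)
      = Real.sqrt (2 * π * ((v:ℝ) + w)) * Real.sqrt (2 * π * ((v:ℝ) * w / ((v:ℝ) + w))) := by
    rw [← Real.sqrt_mul (by positivity), ← Real.sqrt_mul (by positivity)]
    ring_nf
    congr 1
    field_simp
    ring
  rw [hsq]
  congr 1
  congr 1
  field_simp
  ring

lemma gauss_bind_gauss (m : ℝ) (v w : ℝ≥0) :
    (gaussianReal m v).bind (fun z => gaussianReal z w) = gaussianReal m (v + w) := by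
  by_cases hv : v = 0
  · rw [hv, gaussianReal_zero_var, Measure.dirac_bind (meas_gauss w), zero_add]
  by_cases hw : w = 0
  · simp only [hw, gaussianReal_zero_var, add_zero]
    exact Measure.bind_dirac
  have hvw : v + w ≠ 0 := by positivity
  ext s hs
  rw [Measure.bind_apply hs (meas_gauss w).aemeasurable, gaussianReal_apply m hvw s]
  calc ∫⁻ z, gaussianReal z w s ∂(gaussianReal m v)
      = ∫⁻ z, gaussianPDF m v z * gaussianReal z w s := by
        have hg : Measurable fun z : ℝ => gaussianReal z w s :=
          (Measure.measurable_coe hs).comp (meas_gauss w)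
        rw [gaussianReal_of_var_ne_zero m hv,
          lintegral_withDensity_eq_lintegral_mul _ (measurable_gaussianPDF m v) hg]
        rfl
    _ = ∫⁻ z, ∫⁻ y in s, gaussianPDF m v z * gaussianPDF z w y := by
        congr 1 with z
        rw [gaussianReal_apply z hw s, lintegral_const_mul _ (measurable_gaussianPDF z w)]
    _ = ∫⁻ y in s, ∫⁻ z, gaussianPDF m v z * gaussianPDF z w y := by
        apply lintegral_lintegral_swap
        apply Measurable.aemeasurable
        unfold gaussianPDF gaussianPDFReal
        fun_prop
    _ = ∫⁻ y in s, gaussianPDF m (v + w) y := by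
        congr 1 with y
        unfold gaussianPDF
        calc ∫⁻ z, ENNReal.ofReal (gaussianPDFReal m v z) * ENNReal.ofReal (gaussianPDFReal z w y)
            = ∫⁻ z, ENNReal.ofReal (gaussianPDFReal m (v+w) y *
                gaussianPDFReal ((w * m + v * y) / (v + w)) (v * w / (v + w)) z) := by
              congr 1 with z
              rw [← ENNReal.ofReal_mul (gaussianPDFReal_nonneg _ _ _), pdf_conv hv hw]
          _ = ENNReal.ofReal (gaussianPDFReal m (v+w) y) := by
              rw [← ofReal_integral_eq_lintegral_ofReal
                  ((integrable_gaussianPDFReal _ _).const_mul _)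
                  (Filter.Eventually.of_forall fun z => mul_nonneg (gaussianPDFReal_nonneg _ _ _)
                    (gaussianPDFReal_nonneg _ _ _)),
                integral_const_mul, integral_gaussianPDFReal_eq_one _ (by positivity), mul_one]

/-- Chapman--Kolmogorov / semigroup property of the Ornstein--Uhlenbeck transition
kernels `x ↦ N(exp(-t)·x, 1 - exp(-2t))`. -/
theorem ou_chapman_kolmogorov (s t : ℝ) (hs : 0 ≤ s) (ht : 0 ≤ t) (x : ℝ) :
    (gaussianReal (Real.exp (-t) * x) (1 - Real.exp (-2 * t)).toNNReal).bind
        (fun y => gaussianReal (Real.exp (-s) * y) (1 - Real.exp (-2 * s)).toNNReal)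
      = gaussianReal (Real.exp (-(s + t)) * x) (1 - Real.exp (-2 * (s + t))).toNNReal := by
  set a := Real.exp (-s) with ha
  set m := Real.exp (-t) * x with hm
  set v := (1 - Real.exp (-2 * t)).toNNReal with hv
  set w := (1 - Real.exp (-2 * s)).toNNReal with hw
  have key : (gaussianReal m v).bind (fun y => gaussianReal (a * y) w)
      = ((gaussianReal m v).map (a * ·)).bind (fun z => gaussianReal z w) := by
    rw [Measure.bind, Measure.bind, Measure.map_map (meas_gauss w) (measurable_const_mul a)]
    rfl
  rw [key, gaussianReal_map_const_mul, gauss_bind_gauss]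
  have hmean : a * m = Real.exp (-(s + t)) * x := by
    rw [ha, hm, ← mul_assoc, ← Real.exp_add]; ring_nf
  have hvt : (0:ℝ) ≤ 1 - Real.exp (-2 * t) := by
    have := Real.exp_le_one_iff.mpr (by linarith : -2 * t ≤ 0); linarith
  have hvs : (0:ℝ) ≤ 1 - Real.exp (-2 * s) := by
    have := Real.exp_le_one_iff.mpr (by linarith : -2 * s ≤ 0); linarith
  rw [hmean]
  congr 1
  ext
  push_cast
  rw [hv, hw, Real.coe_toNNReal _ hvt, Real.coe_toNNReal _ hvs,
    Real.coe_toNNReal _ (by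
      have := Real.exp_le_one_iff.mpr (by linarith : -2 * (s + t) ≤ 0); linarith)]
  have h1 : a ^ 2 = Real.exp (-2 * s) := by rw [ha, sq, ← Real.exp_add]; ring_nf
  have h2 : Real.exp (-2 * s) * Real.exp (-2 * t) = Real.exp (-2 * (s + t)) := by
    rw [← Real.exp_add]; ring_nf
  rw [h1]; nlinarith [h2]
end
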